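/- Let α, γ be real numbers with γ ≥ 0 and α ≥ (2^{1/3} − 1)^{1/4}·γ (so in particular α ≥ 0). Then for every integer n ≥ 4 divisible by 4, the maximum of per A over A ∈ Λ̂_n(α, γ−α, γ) equals (2(α⁴ + γ⁴))^{n/4}. -/

import Mathlib

open Matrix Equiv Finset Function MulAction




lemma sigma_cast_eq {ι : Type*} {b : ι → Type*} (y : Σ i, b i) (k : ι) (h : y.1 = k) :
    (⟨k, cast (congrArg b h) y.2⟩ : Σ i, b i) = y := by
  cases y; cases h; rfl

theorem permanent_submatrix_equiv {m n : Type*} [Fintype m] [DecidableEq m] [Fintype n]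
    [DecidableEq n] (e : m ≃ n) (M : Matrix n n ℝ) :
    (M.submatrix e e).permanent = M.permanent := by
  unfold Matrix.permanent
  rw [← Equiv.sum_comp (e.permCongr) (fun σ : Perm n => ∏ i, M (σ i) i)]
  refine Finset.sum_congr rfl fun σ _ => ?_
  rw [← Equiv.prod_comp e.symm (fun i => M.submatrix e e (σ i) i)]
  refine Finset.prod_congr rfl fun j _ => ?_
  simp [Matrix.submatrix_apply, Equiv.permCongr_apply]

theorem permanent_sigma {ι : Type*} [Fintype ι] [DecidableEq ι] {b : ι → Type*}
    [∀ i, Fintype (b i)] [∀ i, DecidableEq (b i)]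
    (M : Matrix (Σ i, b i) (Σ i, b i) ℝ)
    (hM : ∀ x y : Σ i, b i, x.1 ≠ y.1 → M x y = 0) :
    M.permanent = ∏ i, (Matrix.of fun x y : b i => M ⟨i, x⟩ ⟨i, y⟩).permanent := by
  classical
  unfold Matrix.permanent
  rw [Finset.prod_univ_sum]
  set pres : Finset (Perm (Σ i, b i)) := univ.filter (fun σ => ∀ x : Σ i, b i, (σ x).1 = x.1)
    with hpres
  have hmem : ∀ σ : Perm (Σ i, b i), σ ∈ pres ↔ ∀ x : Σ i, b i, (σ x).1 = x.1 := by
    intro σ; simp [hpres]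
  rw [← Finset.sum_subset (Finset.subset_univ pres) (fun σ _ hσ => ?_)]
  · refine Finset.sum_bij'
      (i := fun σ hσ => fun k => Equiv.ofBijective
        (fun x : b k => cast (congrArg b ((hmem σ).1 hσ ⟨k, x⟩)) (σ ⟨k, x⟩).2) ?_)
      (j := fun g _ => Equiv.sigmaCongrRight g) ?_ ?_ ?_ ?_ ?_
    · -- bijective
      have hσ' := (hmem σ).1 hσ
      refine (Finite.injective_iff_bijective).1 (fun x y hxy => ?_)
      have hx := sigma_cast_eq (σ ⟨k, x⟩) k (hσ' ⟨k, x⟩)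
      have hy := sigma_cast_eq (σ ⟨k, y⟩) k (hσ' ⟨k, y⟩)
      have : σ ⟨k, x⟩ = σ ⟨k, y⟩ := by rw [← hx, ← hy, hxy]
      simpa using σ.injective this
    · intro σ hσ; exact Fintype.mem_piFinset.2 fun k => Finset.mem_univ _
    · intro g _
      rw [hmem]; intro x; rfl
    · -- left inverse
      intro σ hσ
      refine Equiv.ext fun x => ?_
      rcases x with ⟨k, xx⟩
      show (⟨k, _⟩ : Σ i, b i) = σ ⟨k, xx⟩
      exact sigma_cast_eq (σ ⟨k, xx⟩) k ((hmem σ).1 hσ ⟨k, xx⟩)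
    · -- right inverse
      intro g _
      funext k
      exact Equiv.ext fun x => rfl
    · -- values
      intro σ hσ
      rw [← Finset.univ_sigma_univ, Finset.prod_sigma]
      refine Finset.prod_congr rfl fun k _ => Finset.prod_congr rfl fun x _ => ?_
      simp only [Matrix.of_apply, Equiv.ofBijective_apply]
      rw [sigma_cast_eq (σ ⟨k, x⟩) k ((hmem σ).1 hσ ⟨k, x⟩)]
  · rw [hmem] at hσ
    push_neg at hσ
    obtain ⟨x, hx⟩ := hσ
    exact Finset.prod_eq_zero (Finset.mem_univ x) (hM _ _ hx)




def pIndep (t : ℕ) : Finset (Finset ℕ) :=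
  ((Finset.range t).powerset).filter (fun E => ∀ i ∈ E, i + 1 ∉ E)

def cIndep (m : ℕ) : Finset (Finset ℕ) :=
  ((Finset.range m).powerset).filter (fun E => ∀ i ∈ E, (i + 1) % m ∉ E)

noncomputable def wgt (α β γ : ℝ) (v : ℕ) (E : Finset ℕ) : ℝ :=
  α ^ E.card * γ ^ E.card * β ^ (v - 2 * E.card)

noncomputable def pS (α β γ : ℝ) (t : ℕ) : ℝ := ∑ E ∈ pIndep t, wgt α β γ (t + 1) E

noncomputable def cS (α β γ : ℝ) (m : ℕ) : ℝ := ∑ E ∈ cIndep m, wgt α β γ m E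

lemma pIndep_mem {t : ℕ} {E : Finset ℕ} :
    E ∈ pIndep t ↔ E ⊆ Finset.range t ∧ ∀ i ∈ E, i + 1 ∉ E := by
  simp [pIndep]

lemma cIndep_mem {m : ℕ} {E : Finset ℕ} :
    E ∈ cIndep m ↔ E ⊆ Finset.range m ∧ ∀ i ∈ E, (i + 1) % m ∉ E := by
  simp [cIndep]

lemma card_le_of_pIndep {t : ℕ} {E : Finset ℕ} (hE : E ∈ pIndep t) :
    2 * E.card ≤ t + 1 := by
  rw [pIndep_mem] at hE
  have hdisj : Disjoint E (E.image (· + 1)) := by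
    rw [Finset.disjoint_left]
    intro x hx hx'
    obtain ⟨y, hy, rfl⟩ := Finset.mem_image.1 hx'
    exact hE.2 y hy hx
  have hsub : E ∪ E.image (· + 1) ⊆ Finset.range (t + 1) := by
    intro x hx
    rcases Finset.mem_union.1 hx with h | h
    · exact Finset.mem_range.2 (Nat.lt_succ_of_lt (Finset.mem_range.1 (hE.1 h)))
    · obtain ⟨y, hy, rfl⟩ := Finset.mem_image.1 h
      exact Finset.mem_range.2 (Nat.succ_lt_succ (Finset.mem_range.1 (hE.1 hy)))
  have := Finset.card_le_card hsub
  rw [Finset.card_union_of_disjoint hdisj,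
    Finset.card_image_of_injective _ (add_left_injective 1), Finset.card_range] at this
  omega

lemma card_le_of_cIndep {m : ℕ} {E : Finset ℕ} (hm : 0 < m) (hE : E ∈ cIndep m) :
    2 * E.card ≤ m := by
  rw [cIndep_mem] at hE
  have hdisj : Disjoint E (E.image (fun i => (i + 1) % m)) := by
    rw [Finset.disjoint_left]
    intro x hx hx'
    obtain ⟨y, hy, rfl⟩ := Finset.mem_image.1 hx'
    exact hE.2 y hy hx
  have hsub : E ∪ E.image (fun i => (i + 1) % m) ⊆ Finset.range m := by
    intro x hx
    rcases Finset.mem_union.1 hx with h | h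
    · exact hE.1 h
    · obtain ⟨y, _, rfl⟩ := Finset.mem_image.1 h
      exact Finset.mem_range.2 (Nat.mod_lt _ hm)
  have hinj : Set.InjOn (fun i => (i + 1) % m) E := by
    intro x hx y hy hxy
    have hx' := Finset.mem_range.1 (hE.1 hx)
    have hy' := Finset.mem_range.1 (hE.1 hy)
    dsimp at hxy
    rcases Nat.lt_or_ge (x + 1) m with h1 | h1
    · rcases Nat.lt_or_ge (y + 1) m with h2 | h2
      · rw [Nat.mod_eq_of_lt h1, Nat.mod_eq_of_lt h2] at hxy; omega
      · have : y + 1 = m := by omega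
        rw [Nat.mod_eq_of_lt h1, this, Nat.mod_self] at hxy; omega
    · have : x + 1 = m := by omega
      rcases Nat.lt_or_ge (y + 1) m with h2 | h2
      · rw [this, Nat.mod_self, Nat.mod_eq_of_lt h2] at hxy; omega
      · have h2' : y + 1 = m := by omega
        omega
  have := Finset.card_le_card hsub
  rw [Finset.card_union_of_disjoint hdisj, Finset.card_image_of_injOn hinj,
    Finset.card_range] at this
  omega

lemma pS_zero (α β γ : ℝ) : pS α β γ 0 = β := by
  have : pIndep 0 = {∅} := by decide
  simp [pS, this, wgt]

lemma pS_one (α β γ : ℝ) : pS α β γ 1 = β ^ 2 + α * γ := by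
  have h : pIndep 1 = {∅, {0}} := by decide
  rw [pS, h, Finset.sum_pair (by decide)]
  simp [wgt]

lemma pS_rec (α β γ : ℝ) (t : ℕ) :
    pS α β γ (t + 2) = β * pS α β γ (t + 1) + (α * γ) * pS α β γ t := by
  rw [pS, ← Finset.sum_filter_add_sum_filter_not (pIndep (t + 2)) (fun E => t + 1 ∈ E),
    add_comm (β * pS α β γ (t + 1))]
  congr 1
  · -- terms containing edge t+1 : in bijection with pIndep t
    rw [pS, Finset.mul_sum]
    refine Finset.sum_bij' (i := fun E _ => E.erase (t + 1)) (j := fun F _ => insert (t + 1) F)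
      ?_ ?_ ?_ ?_ ?_
    · intro E hE
      rw [Finset.mem_filter, pIndep_mem] at hE
      obtain ⟨⟨hsub, hind⟩, hmem⟩ := hE
      rw [pIndep_mem]
      constructor
      · intro x hx
        have hx1 := Finset.mem_erase.1 hx
        have hx2 := Finset.mem_range.1 (hsub hx1.2)
        have hxt : x ≠ t := by
          rintro rfl
          exact hind x hx1.2 hmem
        exact Finset.mem_range.2 (by omega)
      · intro i hi
        have hi1 := Finset.mem_erase.1 hi
        intro hc
        exact hind i hi1.2 (Finset.mem_erase.1 hc).2
    · intro F hF
      rw [pIndep_mem] at hF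
      rw [Finset.mem_filter, pIndep_mem]
      refine ⟨⟨?_, ?_⟩, Finset.mem_insert_self _ _⟩
      · intro x hx
        rcases Finset.mem_insert.1 hx with rfl | h
        · exact Finset.mem_range.2 (by omega)
        · exact Finset.mem_range.2 (by have := Finset.mem_range.1 (hF.1 h); omega)
      · intro i hi
        rcases Finset.mem_insert.1 hi with rfl | h
        · intro hc
          rcases Finset.mem_insert.1 hc with h' | h'
          · omega
          · have := Finset.mem_range.1 (hF.1 h'); omega
        · intro hc
          rcases Finset.mem_insert.1 hc with h' | h'
          · have := Finset.mem_range.1 (hF.1 h); omega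
          · exact hF.2 i h h'
    · intro E hE
      exact Finset.insert_erase (Finset.mem_filter.1 hE).2
    · intro F hF
      refine Finset.erase_insert ?_
      intro hc
      rw [pIndep_mem] at hF
      have := Finset.mem_range.1 (hF.1 hc); omega
    · intro E hE
      rw [Finset.mem_filter] at hE
      obtain ⟨hE', hmem⟩ := hE
      have hc1 : E.card = (E.erase (t + 1)).card + 1 := by
        rw [Finset.card_erase_of_mem hmem]
        have : 0 < E.card := Finset.card_pos.2 ⟨_, hmem⟩
        omega
      rw [wgt, wgt, hc1]
      have : t + 2 + 1 - 2 * ((E.erase (t + 1)).card + 1) = t + 1 - 2 * (E.erase (t + 1)).card :=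
        by omega
      rw [this]
      ring
  · -- terms without edge t+1 : equals β * pS (t+1)
    have hset : (pIndep (t + 2)).filter (fun E => ¬ t + 1 ∈ E) = pIndep (t + 1) := by
      ext E
      rw [Finset.mem_filter, pIndep_mem, pIndep_mem]
      constructor
      · rintro ⟨⟨hsub, hind⟩, hmem⟩
        refine ⟨fun x hx => ?_, hind⟩
        have := Finset.mem_range.1 (hsub hx)
        have : x ≠ t + 1 := fun h => hmem (h ▸ hx)
        exact Finset.mem_range.2 (by omega)
      · rintro ⟨hsub, hind⟩
        refine ⟨⟨fun x hx => ?_, hind⟩, fun hc => by have := Finset.mem_range.1 (hsub hc); omega⟩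
        have := Finset.mem_range.1 (hsub hx)
        exact Finset.mem_range.2 (by omega)
    rw [hset, pS, Finset.mul_sum]
    refine Finset.sum_congr rfl fun E hE => ?_
    have hcard := card_le_of_pIndep hE
    rw [wgt, wgt]
    have : t + 2 + 1 - 2 * E.card = (t + 1 + 1 - 2 * E.card) + 1 := by omega
    rw [this, pow_succ]
    ring

lemma cS_split (α β γ : ℝ) {m : ℕ} (hm : 3 ≤ m) :
    cS α β γ m = pS α β γ (m - 1) + (α * γ) * pS α β γ (m - 3) := by
  obtain ⟨j, rfl⟩ : ∃ j, m = j + 3 := ⟨m - 3, by omega⟩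
  have h1 : j + 3 - 1 = j + 2 := by omega
  have h3 : j + 3 - 3 = j := by omega
  rw [h1, h3, cS,
    ← Finset.sum_filter_add_sum_filter_not (cIndep (j + 3)) (fun E => j + 2 ∈ E),
    add_comm (pS α β γ (j + 2))]
  congr 1
  · -- wrap edge used
    rw [pS, Finset.mul_sum]
    refine Finset.sum_bij'
      (i := fun E _ => (E.erase (j + 2)).image (· - 1))
      (j := fun F _ => insert (j + 2) (F.image (· + 1))) ?_ ?_ ?_ ?_ ?_
    · intro E hE
      rw [Finset.mem_filter, cIndep_mem] at hE
      obtain ⟨⟨hsub, hind⟩, hmem⟩ := hE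
      have h0 : 0 ∉ E := by
        have := hind (j + 2) hmem
        rwa [(by omega : j + 2 + 1 = j + 3), Nat.mod_self] at this
      have hj1 : j + 1 ∉ E := by
        intro hc
        have := hind (j + 1) hc
        rw [Nat.mod_eq_of_lt (by omega)] at this
        exact this hmem
      rw [pIndep_mem]
      constructor
      · intro y hy
        obtain ⟨x, hx, rfl⟩ := Finset.mem_image.1 hy
        obtain ⟨hne, hxE⟩ := Finset.mem_erase.1 hx
        have hlt := Finset.mem_range.1 (hsub hxE)
        have : x ≠ 0 := fun h => h0 (h ▸ hxE)
        have : x ≠ j + 1 := fun h => hj1 (h ▸ hxE)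
        exact Finset.mem_range.2 (by omega)
      · intro y hy hc
        obtain ⟨x, hx, rfl⟩ := Finset.mem_image.1 hy
        obtain ⟨hne, hxE⟩ := Finset.mem_erase.1 hx
        obtain ⟨z, hz, hzc⟩ := Finset.mem_image.1 hc
        obtain ⟨hne', hzE⟩ := Finset.mem_erase.1 hz
        have hx0 : x ≠ 0 := fun h => h0 (h ▸ hxE)
        have hz0 : z ≠ 0 := fun h => h0 (h ▸ hzE)
        have hxlt := Finset.mem_range.1 (hsub hxE)
        have hzlt := Finset.mem_range.1 (hsub hzE)
        have hzx : z = x + 1 := by omega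
        have := hind x hxE
        rw [Nat.mod_eq_of_lt (by omega)] at this
        exact this (hzx ▸ hzE)
    · intro F hF
      rw [pIndep_mem] at hF
      obtain ⟨hsub, hind⟩ := hF
      rw [Finset.mem_filter, cIndep_mem]
      refine ⟨⟨?_, ?_⟩, Finset.mem_insert_self _ _⟩
      · intro x hx
        rcases Finset.mem_insert.1 hx with rfl | h
        · exact Finset.mem_range.2 (by omega)
        · obtain ⟨y, hy, rfl⟩ := Finset.mem_image.1 h
          have := Finset.mem_range.1 (hsub hy)
          exact Finset.mem_range.2 (by omega)
      · intro i hi hc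
        rcases Finset.mem_insert.1 hi with rfl | h
        · rw [(by omega : j + 2 + 1 = j + 3), Nat.mod_self] at hc
          rcases Finset.mem_insert.1 hc with h' | h'
          · omega
          · obtain ⟨y, hy, hy'⟩ := Finset.mem_image.1 h'
            omega
        · obtain ⟨y, hy, rfl⟩ := Finset.mem_image.1 h
          have hylt := Finset.mem_range.1 (hsub hy)
          rw [Nat.mod_eq_of_lt (by omega)] at hc
          rcases Finset.mem_insert.1 hc with h' | h'
          · omega
          · obtain ⟨z, hz, hz'⟩ := Finset.mem_image.1 h'
            have : z = y + 1 := by omega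
            exact hind y hy (this ▸ hz)
    · intro E hE
      rw [Finset.mem_filter, cIndep_mem] at hE
      obtain ⟨⟨hsub, hind⟩, hmem⟩ := hE
      have h0 : 0 ∉ E := by
        have := hind (j + 2) hmem
        rwa [(by omega : j + 2 + 1 = j + 3), Nat.mod_self] at this
      have himg : ((E.erase (j + 2)).image (· - 1)).image (· + 1) = E.erase (j + 2) := by
        rw [Finset.image_image]
        refine Finset.image_congr ?_ |>.trans Finset.image_id
        intro x hx
        obtain ⟨hne, hxE⟩ := Finset.mem_erase.1 hx
        have : x ≠ 0 := fun h => h0 (h ▸ hxE)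
        simp only [Function.comp_apply, id_eq]
        omega
      rw [himg, Finset.insert_erase hmem]
    · intro F hF
      rw [pIndep_mem] at hF
      obtain ⟨hsub, hind⟩ := hF
      have hne : j + 2 ∉ F.image (· + 1) := by
        intro hc
        obtain ⟨y, hy, hy'⟩ := Finset.mem_image.1 hc
        have := Finset.mem_range.1 (hsub hy)
        omega
      rw [Finset.erase_insert hne, Finset.image_image]
      refine Finset.image_congr ?_ |>.trans Finset.image_id
      intro x hx
      simp only [Function.comp_apply, id_eq]
      omega
    · intro E hE
      rw [Finset.mem_filter] at hE
      obtain ⟨hE', hmem⟩ := hE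
      have hindep := hE'
      rw [cIndep_mem] at hindep
      have h0 : 0 ∉ E := by
        have := hindep.2 (j + 2) hmem
        rwa [(by omega : j + 2 + 1 = j + 3), Nat.mod_self] at this
      have hcinj : Set.InjOn (· - 1) (E.erase (j + 2)) := by
        intro x hx y hy hxy
        have hx0 : x ≠ 0 := fun h => h0 (h ▸ (Finset.mem_erase.1 hx).2)
        have hy0 : y ≠ 0 := fun h => h0 (h ▸ (Finset.mem_erase.1 hy).2)
        dsimp at hxy
        omega
      have hcard : ((E.erase (j + 2)).image (· - 1)).card = E.card - 1 := by
        rw [Finset.card_image_of_injOn hcinj, Finset.card_erase_of_mem hmem]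
      have hpos : 0 < E.card := Finset.card_pos.2 ⟨_, hmem⟩
      obtain ⟨c, hc⟩ : ∃ c, E.card = c + 1 := ⟨E.card - 1, by omega⟩
      rw [wgt, wgt, hcard, hc]
      have he2 : j + 3 - 2 * (c + 1) = j + 1 - 2 * c := by omega
      have he3 : c + 1 - 1 = c := by omega
      rw [he2, he3]
      ring
  · -- wrap edge unused
    have hset : (cIndep (j + 3)).filter (fun E => ¬ j + 2 ∈ E) = pIndep (j + 2) := by
      ext E
      rw [Finset.mem_filter, cIndep_mem, pIndep_mem]
      constructor
      · rintro ⟨⟨hsub, hind⟩, hmem⟩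
        constructor
        · intro x hx
          have := Finset.mem_range.1 (hsub hx)
          have : x ≠ j + 2 := fun h => hmem (h ▸ hx)
          exact Finset.mem_range.2 (by omega)
        · intro i hi hc
          have hilt := Finset.mem_range.1 (hsub hi)
          have hine : i ≠ j + 2 := fun h => hmem (h ▸ hi)
          have := hind i hi
          rw [Nat.mod_eq_of_lt (by omega)] at this
          exact this hc
      · rintro ⟨hsub, hind⟩
        have hm2 : j + 2 ∉ E := fun hc => by have := Finset.mem_range.1 (hsub hc); omega
        refine ⟨⟨fun x hx => ?_, fun i hi hc => ?_⟩, hm2⟩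
        · have := Finset.mem_range.1 (hsub hx)
          exact Finset.mem_range.2 (by omega)
        · have hilt := Finset.mem_range.1 (hsub hi)
          rw [Nat.mod_eq_of_lt (by omega)] at hc
          exact hind i hi hc
    rw [hset, pS]

lemma pS_closed (α γ : ℝ) (t : ℕ) :
    (γ + α) * pS α (γ - α) γ t = γ ^ (t + 2) - (-α) ^ (t + 2) := by
  induction t using Nat.strong_induction_on with
  | _ t ih =>
    match t with
    | 0 => rw [pS_zero]; ring
    | 1 => rw [pS_one]; ring
    | (t + 2) =>
      have e1 := ih (t + 1) (by omega)
      have e2 := ih t (by omega)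
      rw [pS_rec]
      rw [(by omega : t + 1 + 2 = t + 3), pow_add, pow_add] at e1
      rw [pow_add, pow_add] at e2
      rw [(by omega : t + 2 + 2 = t + 4), pow_add, pow_add]
      linear_combination (γ - α) * e1 + (α * γ) * e2

lemma cS_value (α γ : ℝ) (hα : 0 ≤ α) (hγ : 0 ≤ γ) {m : ℕ} (hm : 3 ≤ m) :
    cS α (γ - α) γ m = γ ^ m + (-α) ^ m := by
  by_cases h : γ + α = 0
  · have hγ0 : γ = 0 := by nlinarith
    have hα0 : α = 0 := by nlinarith
    subst hγ0; subst hα0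
    rw [cS, Finset.sum_eq_zero (fun E _ => ?_)]
    · rw [zero_pow (by omega : m ≠ 0), neg_zero, zero_pow (by omega : m ≠ 0)]
      norm_num
    · rw [wgt]
      rcases Nat.eq_zero_or_pos E.card with hc | hc
      · rw [hc, (by norm_num : (0:ℝ) - 0 = 0), zero_pow (by omega : m - 2 * 0 ≠ 0)]
        ring
      · rw [zero_pow (by omega : E.card ≠ 0)]
        ring
  · apply mul_left_cancel₀ h
    obtain ⟨j, rfl⟩ : ∃ j, m = j + 3 := ⟨m - 3, by omega⟩
    rw [cS_split α (γ - α) γ hm, (by omega : j + 3 - 1 = j + 2), (by omega : j + 3 - 3 = j),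
      mul_add]
    have e1 := pS_closed α γ (j + 2)
    have e2 := pS_closed α γ j
    rw [(by omega : j + 2 + 2 = j + 4), pow_add, pow_add] at e1
    rw [pow_add, pow_add] at e2
    rw [(by omega : j + 3 = j + 3)]
    rw [pow_add, pow_add]
    linear_combination e1 + (α * γ) * e2




section Circ

variable {m : ℕ}

noncomputable def circ (α γ : ℝ) (m : ℕ) : Matrix (ZMod m) (ZMod m) ℝ :=
  Matrix.of fun i j =>
    α * (if i = j + 1 then 1 else 0) + (γ - α) * (if i = j then 1 else 0) +
      γ * (if j = i + 1 then 1 else 0)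

lemma zmod_one_ne_zero [NeZero m] (hm : 3 ≤ m) : (1 : ZMod m) ≠ 0 := by
  intro h
  rw [show (1 : ZMod m) = ((1 : ℕ) : ZMod m) by norm_cast,
    ZMod.natCast_eq_zero_iff] at h
  exact absurd (Nat.le_of_dvd one_pos h) (by omega)

lemma zmod_two_ne_zero [NeZero m] (hm : 3 ≤ m) : (2 : ZMod m) ≠ 0 := by
  intro h
  rw [show (2 : ZMod m) = ((2 : ℕ) : ZMod m) by norm_cast,
    ZMod.natCast_eq_zero_iff] at h
  exact absurd (Nat.le_of_dvd two_pos h) (by omega)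

lemma zmod_add_one_ne [NeZero m] (hm : 3 ≤ m) (x : ZMod m) : x + 1 ≠ x := by
  intro h
  exact zmod_one_ne_zero hm (by linear_combination h - x)

lemma zmod_add_two_ne [NeZero m] (hm : 3 ≤ m) (x : ZMod m) : x + 2 ≠ x := by
  intro h
  exact zmod_two_ne_zero hm (by linear_combination h - x)

lemma circ_up [NeZero m] (α γ : ℝ) (hm : 3 ≤ m) (x : ZMod m) :
    circ α γ m (x + 1) x = α := by
  rw [circ, Matrix.of_apply, if_pos rfl, if_neg (zmod_add_one_ne hm x),
    if_neg (fun h : x = x + 1 + 1 => zmod_two_ne_zero hm (by linear_combination -h))]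
  ring

lemma circ_down [NeZero m] (α γ : ℝ) (hm : 3 ≤ m) (x : ZMod m) :
    circ α γ m (x - 1) x = γ := by
  have h1 : x - 1 ≠ x + 1 := fun h => zmod_two_ne_zero hm (by linear_combination -h)
  have h2 : x - 1 ≠ x := fun h => zmod_one_ne_zero hm (by linear_combination -h)
  rw [circ, Matrix.of_apply, if_neg h1, if_neg h2, if_pos (by ring)]
  ring

lemma circ_diag [NeZero m] (α γ : ℝ) (hm : 3 ≤ m) (x : ZMod m) :
    circ α γ m x x = γ - α := by
  have h1 : x ≠ x + 1 := fun h => zmod_add_one_ne hm x h.symm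
  rw [circ, Matrix.of_apply, if_neg h1, if_pos rfl]
  ring

lemma circ_zero (α γ : ℝ) (x y : ZMod m) (h1 : x ≠ y + 1) (h2 : x ≠ y) (h3 : y ≠ x + 1) :
    circ α γ m x y = 0 := by
  rw [circ, Matrix.of_apply, if_neg h1, if_neg h2, if_neg h3]
  ring

/-- locality from a nonzero entry -/
lemma circ_ne_zero_cases (α γ : ℝ) {x y : ZMod m} (h : circ α γ m x y ≠ 0) :
    x = y + 1 ∨ x = y ∨ y = x + 1 := by
  by_contra hc
  push_neg at hc
  exact h (circ_zero α γ x y hc.1 hc.2.1 hc.2.2)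

section Perms

variable [NeZero m]

/-- the `+1` shift -/
def shiftUp (m : ℕ) : Equiv.Perm (ZMod m) := Equiv.addRight 1

/-- the `-1` shift -/
def shiftDown (m : ℕ) : Equiv.Perm (ZMod m) := Equiv.addRight (-1)

lemma shiftUp_apply (x : ZMod m) : shiftUp m x = x + 1 := rfl

lemma shiftDown_apply (x : ZMod m) : shiftDown m x = x - 1 := by
  show x + (-1) = x - 1; ring

def Loc (σ : Perm (ZMod m)) : Prop := ∀ j : ZMod m, σ j = j + 1 ∨ σ j = j ∨ σ j = j - 1

lemma loc_inv {σ : Perm (ZMod m)} (hσ : Loc σ) : Loc σ⁻¹ := by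
  intro j
  have hx : σ (σ⁻¹ j) = j := σ.apply_symm_apply j
  rcases hσ (σ⁻¹ j) with h | h | h
  · rw [hx] at h
    right; right; exact eq_sub_iff_add_eq.2 h.symm
  · rw [hx] at h
    right; left; exact h.symm
  · rw [hx] at h
    left; exact (eq_sub_iff_add_eq.1 h).symm

lemma all_up (hm : 3 ≤ m) {σ : Perm (ZMod m)} (hloc : Loc σ) {i : ZMod m}
    (h1 : σ i = i + 1) (h2 : σ (i + 1) = i + 2) : ∀ j, σ j = j + 1 := by
  have key : ∀ j : ZMod m, (σ j = j + 1 ∧ σ (j + 1) = j + 2) →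
      (σ (j - 1) = j ∧ σ j = j + 1) := by
    intro j ⟨hj1, hj2⟩
    refine ⟨?_, hj1⟩
    -- nobody else can map to j
    have hnot : ∀ x : ZMod m, σ x = j → x = j - 1 := by
      intro x hx
      rcases hloc x with h | h | h
      · rw [hx] at h
        exact eq_sub_iff_add_eq.2 h.symm
      · exfalso
        rw [hx] at h
        subst h
        exact zmod_add_one_ne hm j (hj1.symm.trans hx)
      · exfalso
        rw [hx] at h
        have hx' : x = j + 1 := by rw [h]; ring
        rw [hx'] at hx
        exact zmod_add_two_ne hm j (hj2.symm.trans hx)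
    have hsurj : σ (σ⁻¹ j) = j := σ.apply_symm_apply j
    have := hnot _ hsurj
    rw [this] at hsurj
    exact hsurj
  -- propagate backwards
  have step : ∀ t : ℕ, σ (i - t) = i - t + 1 ∧ σ (i - t + 1) = i - t + 2 := by
    intro t
    induction t with
    | zero => simpa using ⟨h1, h2⟩
    | succ t ih =>
      have := key (i - t) ih
      push_cast
      constructor
      · rw [show i - (t + 1) + 1 = i - t by ring, show i - (t + 1) = i - t - 1 by ring]
        exact this.1
      · rw [show i - (t + 1) + 1 = i - t by ring, show i - (t + 1) + 2 = i - t + 1 by ring]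
        exact this.2
  intro j
  have h := (step ((i - j).val)).1
  rwa [ZMod.natCast_rightInverse (i - j), show i - (i - j) = j by ring] at h
  

lemma all_down (hm : 3 ≤ m) {σ : Perm (ZMod m)} (hloc : Loc σ) {i : ZMod m}
    (h1 : σ i = i - 1) (h2 : σ (i - 1) = i - 2) : ∀ j, σ j = j - 1 := by
  have hinv := loc_inv hloc
  have k1 : σ⁻¹ (i - 2) = (i - 2) + 1 := by
    rw [Equiv.Perm.inv_eq_iff_eq, show (i:ZMod m) - 2 + 1 = i - 1 by ring]
    exact h2.symm
  have k2 : σ⁻¹ ((i - 2) + 1) = (i - 2) + 2 := by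
    rw [show (i:ZMod m) - 2 + 1 = i - 1 by ring, show (i:ZMod m) - 2 + 2 = i by ring,
      Equiv.Perm.inv_eq_iff_eq]
    exact h1.symm
  have hup := all_up hm hinv k1 k2
  intro j
  have hh := hup (j - 1)
  rw [show (j:ZMod m) - 1 + 1 = j by ring, Equiv.Perm.inv_eq_iff_eq] at hh
  exact hh.symm

/-- underlying function of the involution attached to an independent set -/
def gE (E : Finset (ZMod m)) : ZMod m → ZMod m := fun x =>
  if x ∈ E then x + 1 else if x - 1 ∈ E then x - 1 else x

lemma gE_of_mem {E : Finset (ZMod m)} {x : ZMod m} (h1 : x ∈ E) : gE E x = x + 1 := by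
  rw [gE]; exact if_pos h1

lemma gE_of_pred {E : Finset (ZMod m)} {x : ZMod m} (h2 : x ∉ E) (h1 : x - 1 ∈ E) :
    gE E x = x - 1 := by
  rw [gE, if_neg h2]; exact if_pos h1

lemma gE_of_none {E : Finset (ZMod m)} {x : ZMod m} (h1 : x ∉ E) (h2 : x - 1 ∉ E) :
    gE E x = x := by
  rw [gE, if_neg h1]; exact if_neg h2

lemma gE_invol {E : Finset (ZMod m)} (hE : ∀ i ∈ E, i + 1 ∉ E) (x : ZMod m) :
    gE E (gE E x) = x := by
  by_cases h1 : x ∈ E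
  · rw [gE_of_mem h1]
    have hc : x + 1 - 1 = x := by ring
    rw [gE_of_pred (hE x h1) (by rwa [hc]), hc]
  · by_cases h2 : x - 1 ∈ E
    · rw [gE_of_pred h1 h2, gE_of_mem h2]
      ring
    · rw [gE_of_none h1 h2, gE_of_none h1 h2]

def permOfE (E : Finset (ZMod m)) (hE : ∀ i ∈ E, i + 1 ∉ E) : Perm (ZMod m) :=
  ⟨gE E, gE E, gE_invol hE, gE_invol hE⟩

lemma permOfE_apply (E : Finset (ZMod m)) (hE : ∀ i ∈ E, i + 1 ∉ E) (x : ZMod m) :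
    permOfE E hE x = gE E x := rfl

lemma gE_eq_add_one_iff (hm : 3 ≤ m) {E : Finset (ZMod m)} (x : ZMod m) :
    gE E x = x + 1 ↔ x ∈ E := by
  constructor
  · intro h
    by_contra hc
    by_cases h2 : x - 1 ∈ E
    · rw [gE_of_pred hc h2] at h
      exact zmod_two_ne_zero hm (by linear_combination -h)
    · rw [gE_of_none hc h2] at h
      exact zmod_one_ne_zero hm (by linear_combination -h)
  · exact gE_of_mem

lemma permOfE_ne_up (hm : 3 ≤ m) {E : Finset (ZMod m)} (hE : ∀ i ∈ E, i + 1 ∉ E) :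
    permOfE E hE ≠ shiftUp m := by
  intro hc
  have hmm : ∀ x : ZMod m, x ∈ E := by
    intro x
    rw [← gE_eq_add_one_iff hm x]
    show permOfE E hE x = x + 1
    rw [hc]; rfl
  exact hE 0 (hmm 0) (by simpa using hmm 1)

lemma permOfE_ne_down (hm : 3 ≤ m) {E : Finset (ZMod m)} (hE : ∀ i ∈ E, i + 1 ∉ E) :
    permOfE E hE ≠ shiftDown m := by
  intro hc
  have key : ∀ x : ZMod m, x - 1 ∈ E := by
    intro x
    have hx : gE E x = x - 1 := by
      show permOfE E hE x = x - 1
      rw [hc, shiftDown_apply]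
    by_cases h1 : x ∈ E
    · rw [gE_of_mem h1] at hx
      exact absurd (zmod_two_ne_zero hm (by linear_combination hx)) (fun h => h)
    · by_cases h2 : x - 1 ∈ E
      · exact h2
      · rw [gE_of_none h1 h2] at hx
        exact absurd (zmod_one_ne_zero hm (by linear_combination hx)) (fun h => h)
  have h0 : (0 : ZMod m) ∈ E := by
    have := key 1
    rwa [show (1:ZMod m) - 1 = 0 by ring] at this
  have h1 : (1 : ZMod m) ∈ E := by
    have := key 2
    rwa [show (2:ZMod m) - 1 = 1 by ring] at this
  exact hE 0 h0 (by simpa using h1)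

lemma up_ne_down (hm : 3 ≤ m) : shiftUp m ≠ shiftDown m := by
  intro hc
  have h : (0 : ZMod m) + 1 = 0 - 1 := by
    calc (0 : ZMod m) + 1 = shiftUp m 0 := rfl
    _ = shiftDown m 0 := by rw [hc]
    _ = 0 - 1 := shiftDown_apply 0
  exact zmod_two_ne_zero hm (by linear_combination h)


lemma loc_of_prod_ne_zero {α γ : ℝ} (hm : 3 ≤ m) {σ : Perm (ZMod m)}
    (h : ∏ i, circ α γ m (σ i) i ≠ 0) : Loc σ := by
  intro j
  have hj : circ α γ m (σ j) j ≠ 0 := by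
    intro h0
    exact h (Finset.prod_eq_zero (Finset.mem_univ j) h0)
  rcases circ_ne_zero_cases α γ hj with h | h | h
  · exact Or.inl h
  · exact Or.inr (Or.inl h)
  · exact Or.inr (Or.inr (eq_sub_iff_add_eq.2 h.symm))

theorem circ_permanent (α γ : ℝ) (hm : 3 ≤ m) :
    (circ α γ m).permanent = α ^ m + γ ^ m + cS α (γ - α) γ m := by
  classical
  have hcard : Fintype.card (ZMod m) = m := ZMod.card m
  set T : Perm (ZMod m) → ℝ := fun σ => ∏ i, circ α γ m (σ i) i with hT
  set Sfin : Finset (Perm (ZMod m)) :=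
    univ.filter (fun σ => Loc σ ∧ σ ≠ shiftUp m ∧ σ ≠ shiftDown m) with hSfin
  have hSfin_mem : ∀ σ, σ ∈ Sfin ↔ Loc σ ∧ σ ≠ shiftUp m ∧ σ ≠ shiftDown m := by
    intro σ; simp [hSfin]
  have hup_notin : shiftUp m ∉ insert (shiftDown m) Sfin := by
    intro hc
    rcases Finset.mem_insert.1 hc with h | h
    · exact up_ne_down hm h
    · exact ((hSfin_mem _).1 h).2.1 rfl
  have hdown_notin : shiftDown m ∉ Sfin := fun hc => ((hSfin_mem _).1 hc).2.2 rfl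
  have key : (circ α γ m).permanent = ∑ σ ∈ insert (shiftUp m) (insert (shiftDown m) Sfin), T σ := by
    rw [Matrix.permanent]
    refine (Finset.sum_subset (Finset.subset_univ _) (fun σ _ hσ => ?_)).symm
    by_contra h0
    have hloc : Loc σ := loc_of_prod_ne_zero hm h0
    by_cases h1 : σ = shiftUp m
    · exact hσ (h1 ▸ Finset.mem_insert_self _ _)
    by_cases h2 : σ = shiftDown m
    · exact hσ (Finset.mem_insert.2 (Or.inr (h2 ▸ Finset.mem_insert_self _ _)))
    exact hσ (Finset.mem_insert.2 (Or.inr (Finset.mem_insert.2 (Or.inr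
      ((hSfin_mem σ).2 ⟨hloc, h1, h2⟩)))))
  have hup_val : T (shiftUp m) = α ^ m := by
    rw [hT]
    calc ∏ i, circ α γ m (shiftUp m i) i = ∏ _i : ZMod m, α :=
      Finset.prod_congr rfl fun i _ => by rw [shiftUp_apply, circ_up α γ hm]
    _ = α ^ m := by rw [Finset.prod_const, Finset.card_univ, hcard]
  have hdown_val : T (shiftDown m) = γ ^ m := by
    rw [hT]
    calc ∏ i, circ α γ m (shiftDown m i) i = ∏ _i : ZMod m, γ :=
      Finset.prod_congr rfl fun i _ => by rw [shiftDown_apply, circ_down α γ hm]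
    _ = γ ^ m := by rw [Finset.prod_const, Finset.card_univ, hcard]
  rw [key, Finset.sum_insert hup_notin, Finset.sum_insert hdown_notin, hup_val, hdown_val,
    add_assoc]
  congr 1
  congr 1
  -- the sum over involutions
  set cIndepZ : Finset (Finset (ZMod m)) :=
    univ.filter (fun E => ∀ i ∈ E, i + 1 ∉ E) with hcIZ
  have hcIZ_mem : ∀ E, E ∈ cIndepZ ↔ ∀ i ∈ E, i + 1 ∉ E := by intro E; simp [hcIZ]
  set wZ : Finset (ZMod m) → ℝ :=
    fun E => α ^ E.card * γ ^ E.card * (γ - α) ^ (m - 2 * E.card) with hwZ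
  have step1 : ∑ σ ∈ Sfin, T σ = ∑ E ∈ cIndepZ, wZ E := by
    have filter_indep : ∀ σ ∈ Sfin, ∀ i ∈ univ.filter (fun x => σ x = x + 1),
        i + 1 ∉ univ.filter (fun x => σ x = x + 1) := by
      intro σ hσ i hi hi1
      obtain ⟨hloc, hne_up, _⟩ := (hSfin_mem σ).1 hσ
      have e1 : σ i = i + 1 := (Finset.mem_filter.1 hi).2
      have e2 : σ (i + 1) = i + 1 + 1 := (Finset.mem_filter.1 hi1).2
      exact hne_up (Equiv.ext (all_up hm hloc e1 (by rw [e2]; ring)))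
    refine Finset.sum_bij' (i := fun σ _ => univ.filter (fun x => σ x = x + 1))
      (j := fun E hE => permOfE E ((hcIZ_mem E).1 hE)) ?_ ?_ ?_ ?_ ?_
    · intro σ hσ
      exact (hcIZ_mem _).2 (filter_indep σ hσ)
    · intro E hE
      have hEind := (hcIZ_mem E).1 hE
      refine (hSfin_mem _).2 ⟨?_, permOfE_ne_up hm hEind, permOfE_ne_down hm hEind⟩
      intro j
      by_cases h1 : j ∈ E
      · exact Or.inl (gE_of_mem h1)
      by_cases h2 : j - 1 ∈ E
      · exact Or.inr (Or.inr (gE_of_pred h1 h2))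
      · exact Or.inr (Or.inl (gE_of_none h1 h2))
    · -- left inverse
      intro σ hσ
      obtain ⟨hloc, hne_up, hne_down⟩ := (hSfin_mem σ).1 hσ
      refine Equiv.ext fun x => ?_
      show gE (univ.filter (fun y => σ y = y + 1)) x = σ x
      by_cases h1 : σ x = x + 1
      · have h1' : x ∈ univ.filter (fun y => σ y = y + 1) :=
          Finset.mem_filter.2 ⟨Finset.mem_univ _, h1⟩
        rw [gE_of_mem h1', h1]
      by_cases h2 : σ (x - 1) = x
      · have h2' : x - 1 ∈ univ.filter (fun y => σ y = y + 1) := by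
          refine Finset.mem_filter.2 ⟨Finset.mem_univ _, ?_⟩
          rw [h2]; ring
        have h1' : x ∉ univ.filter (fun y => σ y = y + 1) :=
          fun hc => h1 (Finset.mem_filter.1 hc).2
        rw [gE_of_pred h1' h2']
        rcases hloc x with h | h | h
        · exact absurd h h1
        · exfalso
          have := σ.injective (h2.trans h.symm)
          exact zmod_one_ne_zero hm (by linear_combination -this)
        · exact h.symm
      · have h1' : x ∉ univ.filter (fun y => σ y = y + 1) :=
          fun hc => h1 (Finset.mem_filter.1 hc).2
        have h2' : x - 1 ∉ univ.filter (fun y => σ y = y + 1) :=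
          fun hc => h2 (by rw [(Finset.mem_filter.1 hc).2]; ring)
        rw [gE_of_none h1' h2']
        rcases hloc x with h | h | h
        · exact absurd h h1
        · exact h.symm
        · exfalso
          rcases hloc (x - 1) with hh | hh | hh
          · exact h2 (by rw [hh]; ring)
          · have := σ.injective (h.trans hh.symm)
            exact zmod_one_ne_zero hm (by linear_combination this)
          · refine hne_down (Equiv.ext fun y => ?_)
            rw [shiftDown_apply]
            exact all_down hm hloc h (by rw [hh]; ring) y
    · -- right inverse
      intro E hE
      show univ.filter (fun x => permOfE E ((hcIZ_mem E).1 hE) x = x + 1) = E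
      ext x
      rw [Finset.mem_filter]
      constructor
      · intro ⟨_, h⟩
        exact (gE_eq_add_one_iff hm x).1 h
      · intro h
        exact ⟨Finset.mem_univ _, gE_of_mem h⟩
    · -- values
      intro σ hσ
      obtain ⟨hloc, hne_up, hne_down⟩ := (hSfin_mem σ).1 hσ
      set E := univ.filter (fun x => σ x = x + 1) with hEdef
      have hEind : ∀ i ∈ E, i + 1 ∉ E := filter_indep σ hσ
      have hEmem : ∀ x, x ∈ E ↔ σ x = x + 1 := fun x => by simp [hEdef]
      set E' := E.image (· + 1) with hE'def
      have hE'mem : ∀ x : ZMod m, x ∈ E' ↔ x - 1 ∈ E := by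
        intro x
        simp only [hE'def, Finset.mem_image]
        constructor
        · rintro ⟨y, hy, rfl⟩
          rwa [add_sub_cancel_right]
        · intro h
          exact ⟨x - 1, h, by ring⟩
      have hdisj : Disjoint E E' := by
        rw [Finset.disjoint_left]
        intro x hx hx'
        have h1 := (hE'mem x).1 hx'
        have := hEind (x - 1) h1
        rw [sub_add_cancel] at this
        exact this hx
      have hval_up : ∀ x ∈ E, circ α γ m (σ x) x = α := by
        intro x hx
        rw [(hEmem x).1 hx, circ_up α γ hm]
      have hval_down : ∀ x ∈ E', circ α γ m (σ x) x = γ := by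
        intro x hx
        have h1 : x - 1 ∈ E := (hE'mem x).1 hx
        have e1 : σ (x - 1) = x := by
          have := (hEmem _).1 h1
          rw [this]; ring
        have e2 : σ x = x - 1 := by
          rcases hloc x with h | h | h
          · exact absurd ((hEmem x).2 h) (Finset.disjoint_left.1 hdisj.symm hx)
          · exfalso
            have := σ.injective (e1.trans h.symm)
            exact zmod_one_ne_zero hm (by linear_combination -this)
          · exact h
        rw [e2, circ_down α γ hm]
      have hval_diag : ∀ x ∈ (E ∪ E')ᶜ, circ α γ m (σ x) x = γ - α := by
        intro x hx
        rw [Finset.mem_compl, Finset.mem_union] at hx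
        push_neg at hx
        obtain ⟨hx1, hx2⟩ := hx
        have e0 : σ x = x := by
          rcases hloc x with h | h | h
          · exact absurd ((hEmem x).2 h) hx1
          · exact h
          · exfalso
            rcases hloc (x - 1) with hh | hh | hh
            · exact hx2 ((hE'mem x).2 ((hEmem _).2 hh))
            · have := σ.injective (h.trans hh.symm)
              exact zmod_one_ne_zero hm (by linear_combination this)
            · refine hne_down (Equiv.ext fun y => ?_)
              rw [shiftDown_apply]
              exact all_down hm hloc h (by rw [hh]; ring) y
        rw [e0, circ_diag α γ hm]
      have hcE' : E'.card = E.card := Finset.card_image_of_injective _ (add_left_injective 1)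
      have hccompl : (E ∪ E')ᶜ.card = m - 2 * E.card := by
        rw [Finset.card_compl, Finset.card_union_of_disjoint hdisj, hcE', hcard]
        omega
      rw [hT]
      calc ∏ i, circ α γ m (σ i) i
          = (∏ i ∈ E ∪ E', circ α γ m (σ i) i) * ∏ i ∈ (E ∪ E')ᶜ, circ α γ m (σ i) i :=
            (Finset.prod_mul_prod_compl _ _).symm
        _ = ((∏ i ∈ E, circ α γ m (σ i) i) * ∏ i ∈ E', circ α γ m (σ i) i) *
              ∏ i ∈ (E ∪ E')ᶜ, circ α γ m (σ i) i := by rw [Finset.prod_union hdisj]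
        _ = (α ^ E.card * γ ^ E.card) * (γ - α) ^ (m - 2 * E.card) := by
            rw [Finset.prod_congr rfl hval_up, Finset.prod_congr rfl hval_down,
              Finset.prod_congr rfl hval_diag, Finset.prod_const, Finset.prod_const,
              Finset.prod_const, hcE', hccompl]
        _ = wZ E := by rw [hwZ]
  rw [step1]
  -- step 2 : transfer to ℕ
  rw [cS]
  refine Finset.sum_bij' (i := fun E _ => E.image ZMod.val)
    (j := fun F _ => F.image (Nat.cast : ℕ → ZMod m)) ?_ ?_ ?_ ?_ ?_
  · intro E hE
    have hEind := (hcIZ_mem E).1 hE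
    rw [cIndep, Finset.mem_filter, Finset.mem_powerset]
    constructor
    · intro x hx
      obtain ⟨i, _, rfl⟩ := Finset.mem_image.1 hx
      exact Finset.mem_range.2 (ZMod.val_lt i)
    · intro x hx hc
      obtain ⟨i, hi, rfl⟩ := Finset.mem_image.1 hx
      obtain ⟨j, hj, hj'⟩ := Finset.mem_image.1 hc
      have : j = i + 1 := by
        have := congrArg (Nat.cast : ℕ → ZMod m) hj'
        rwa [ZMod.natCast_rightInverse j, ZMod.natCast_mod, Nat.cast_add,
          ZMod.natCast_rightInverse i, Nat.cast_one] at this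
      exact hEind i hi (this ▸ hj)
  · -- j maps into cIndepZ
    intro F hF
    rw [cIndep, Finset.mem_filter, Finset.mem_powerset] at hF
    obtain ⟨hsub, hind⟩ := hF
    rw [hcIZ_mem]
    intro i hi hc
    obtain ⟨x, hx, rfl⟩ := Finset.mem_image.1 hi
    obtain ⟨y, hy, hy'⟩ := Finset.mem_image.1 hc
    have hxm := Finset.mem_range.1 (hsub hx)
    have hym := Finset.mem_range.1 (hsub hy)
    have hcast : ((y : ℕ) : ZMod m) = ((x + 1 : ℕ) : ZMod m) := by
      rw [Nat.cast_add, Nat.cast_one]; exact hy'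
    have hmod : y % m = (x + 1) % m := (ZMod.natCast_eq_natCast_iff _ _ _).1 hcast
    rw [Nat.mod_eq_of_lt hym] at hmod
    exact hind x hx (hmod ▸ hy)
  · -- left inverse
    intro E _
    show Finset.image (Nat.cast : ℕ → ZMod m) (Finset.image ZMod.val E) = E
    rw [Finset.image_image]
    refine (Finset.image_congr ?_).trans Finset.image_id
    intro x _
    exact ZMod.natCast_rightInverse x
  · -- right inverse
    intro F hF
    rw [cIndep, Finset.mem_filter, Finset.mem_powerset] at hF
    show Finset.image ZMod.val (Finset.image (Nat.cast : ℕ → ZMod m) F) = F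
    rw [Finset.image_image]
    refine (Finset.image_congr ?_).trans Finset.image_id
    intro x hx
    have := Finset.mem_range.1 (hF.1 hx)
    show ZMod.val ((x : ℕ) : ZMod m) = x
    rw [ZMod.val_natCast, Nat.mod_eq_of_lt this]
  · -- values
    intro E _
    rw [hwZ, wgt, Finset.card_image_of_injective _ (ZMod.val_injective m)]

end Perms

end Circ




section Decomp

variable {n : ℕ} (s : Equiv.Perm (Fin n))

lemma permMatrix_entry (u v : Fin n) :
    (s.permMatrix ℝ) u v = if v = s u then 1 else 0 := by
  simp [Equiv.Perm.permMatrix, PEquiv.toMatrix_apply, Equiv.toPEquiv_apply, Option.mem_def,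
    eq_comm]

lemma A_entry (α γ : ℝ) (u v : Fin n) :
    (α • ((s⁻¹).permMatrix ℝ) + (γ - α) • (1 : Matrix (Fin n) (Fin n) ℝ) +
      γ • (s.permMatrix ℝ)) u v =
    α * (if u = s v then 1 else 0) + (γ - α) * (if u = v then 1 else 0) +
      γ * (if v = s u then 1 else 0) := by
  have h1 : ((s⁻¹).permMatrix ℝ) u v = if u = s v then 1 else 0 := by
    rw [permMatrix_entry]
    refine if_congr ?_ rfl rfl
    constructor
    · intro h; subst h; exact (s.apply_symm_apply u).symm
    · intro h; subst h; exact (s.symm_apply_apply v).symm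
  simp only [Matrix.add_apply, Matrix.smul_apply, smul_eq_mul, Matrix.one_apply,
    permMatrix_entry, h1]

lemma minPeriod_ge_three (hs : ∀ x, s x ≠ x ∧ s (s x) ≠ x) (x : Fin n) :
    3 ≤ Function.minimalPeriod (fun y => s • y) x := by
  have hper : x ∈ Function.periodicPts (fun y => s • y) := by
    refine ⟨orderOf s, orderOf_pos s, ?_⟩
    rw [Function.IsPeriodicPt, Function.IsFixedPt, smul_iterate_apply, pow_orderOf_eq_one]
    exact one_smul _ _
  have h0 : 0 < Function.minimalPeriod (fun y => s • y) x :=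
    Function.minimalPeriod_pos_of_mem_periodicPts hper
  have hmp := Function.isPeriodicPt_minimalPeriod (fun y => s • y) x
  have h1 : Function.minimalPeriod (fun y => s • y) x ≠ 1 := by
    intro h
    rw [h] at hmp
    have : s x = x := by simpa [Equiv.Perm.smul_def, Function.IsPeriodicPt, Function.IsFixedPt] using hmp
    exact (hs x).1 this
  have h2 : Function.minimalPeriod (fun y => s • y) x ≠ 2 := by
    intro h
    rw [h] at hmp
    have : s (s x) = x := by
      have := hmp
      rw [Function.IsPeriodicPt, Function.IsFixedPt] at this
      simpa [Function.iterate_succ, Equiv.Perm.smul_def] using this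
    exact (hs x).2 this
  omega

variable [Fintype (orbitRel.Quotient (Subgroup.zpowers s) (Fin n))]

noncomputable def OrbE : Fin n ≃
    Σ q : orbitRel.Quotient (Subgroup.zpowers s) (Fin n),
      ZMod (Function.minimalPeriod (fun y => s • y) q.out) :=
  (selfEquivSigmaOrbits (Subgroup.zpowers s) (Fin n)).trans
    (sigmaCongrRight fun q => orbitZPowersEquiv s q.out)

lemma OrbE_symm_apply (q : orbitRel.Quotient (Subgroup.zpowers s) (Fin n))
    (i : ZMod (Function.minimalPeriod (fun y => s • y) q.out)) :
    (OrbE s).symm ⟨q, i⟩ = s ^ (ZMod.cast i : ℤ) • q.out :=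
  rfl

lemma OrbE_apply (q : orbitRel.Quotient (Subgroup.zpowers s) (Fin n)) (i : ℤ) :
    OrbE s (s ^ i • q.out) = ⟨q, (i : ZMod (Function.minimalPeriod (fun y => s • y) q.out))⟩ := by
  rw [Equiv.apply_eq_iff_eq_symm_apply, OrbE_symm_apply, ZMod.coe_intCast,
    zpow_smul_mod_minimalPeriod]

lemma OrbE_s_apply (x : Fin n) :
    OrbE s (s x) = ⟨(OrbE s x).1, (OrbE s x).2 + 1⟩ := by
  rcases hE : OrbE s x with ⟨q, i⟩
  have hx : x = s ^ (ZMod.cast i : ℤ) • q.out := by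
    rw [← OrbE_symm_apply, ← hE, Equiv.symm_apply_apply]
  have hsx : s x = s ^ ((ZMod.cast i : ℤ) + 1) • q.out := by
    rw [hx]
    exact (by rw [← mul_smul, ← _root_.zpow_one_add, add_comm 1 (ZMod.cast i : ℤ)] :
      s • (s ^ (ZMod.cast i : ℤ) • (Quotient.out q)) =
        s ^ ((ZMod.cast i : ℤ) + 1) • Quotient.out q)
  rw [hsx, OrbE_apply]
  have : ((ZMod.cast i + 1 : ℤ) : ZMod (minimalPeriod (fun y => s • y) (Quotient.out q)))
      = i + 1 := by
    rw [Int.cast_add, Int.cast_one, ZMod.intCast_zmod_cast]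
  rw [this]


lemma sub_block (α γ : ℝ) (hs : ∀ x, s x ≠ x ∧ s (s x) ≠ x)
    (q : orbitRel.Quotient (Subgroup.zpowers s) (Fin n))
    (x y : ZMod (Function.minimalPeriod (fun y => s • y) q.out)) :
    (α • ((s⁻¹).permMatrix ℝ) + (γ - α) • (1 : Matrix (Fin n) (Fin n) ℝ) +
      γ • (s.permMatrix ℝ)) ((OrbE s).symm ⟨q, x⟩) ((OrbE s).symm ⟨q, y⟩) =
    circ α γ (Function.minimalPeriod (fun y => s • y) q.out) x y := by
  have hs_symm : ∀ i, s ((OrbE s).symm ⟨q, i⟩) = (OrbE s).symm ⟨q, i + 1⟩ := by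
    intro i
    have h := OrbE_s_apply s ((OrbE s).symm ⟨q, i⟩)
    rw [Equiv.apply_symm_apply] at h
    exact (Equiv.apply_eq_iff_eq_symm_apply _).1 h
  have hcond : ∀ xx yy, ((OrbE s).symm ⟨q, xx⟩ = (OrbE s).symm ⟨q, yy⟩) ↔ xx = yy := by
    intro xx yy
    rw [EmbeddingLike.apply_eq_iff_eq]
    simp
  rw [A_entry, hs_symm, hs_symm]
  simp only [hcond]
  rfl

theorem permanent_A (α γ : ℝ) (hα : 0 ≤ α) (hγ : 0 ≤ γ) (hs : ∀ x, s x ≠ x ∧ s (s x) ≠ x) :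
    (α • ((s⁻¹).permMatrix ℝ) + (γ - α) • (1 : Matrix (Fin n) (Fin n) ℝ) +
      γ • (s.permMatrix ℝ)).permanent =
      ∏ q : orbitRel.Quotient (Subgroup.zpowers s) (Fin n),
        (α ^ Function.minimalPeriod (fun y => s • y) q.out +
          γ ^ Function.minimalPeriod (fun y => s • y) q.out +
          (γ ^ Function.minimalPeriod (fun y => s • y) q.out +
            (-α) ^ Function.minimalPeriod (fun y => s • y) q.out)) := by
  classical
  haveI hNZ : ∀ q : orbitRel.Quotient (Subgroup.zpowers s) (Fin n),
      NeZero (Function.minimalPeriod (fun y => s • y) q.out) :=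
    fun q => ⟨by have := minPeriod_ge_three s hs q.out; omega⟩
  set A := α • ((s⁻¹).permMatrix ℝ) + (γ - α) • (1 : Matrix (Fin n) (Fin n) ℝ) +
    γ • (s.permMatrix ℝ) with hA
  have hfst : ∀ u v : Fin n, ((OrbE s) u).1 ≠ ((OrbE s) v).1 → A u v = 0 := by
    intro u v huv
    have h1 : u ≠ s v := by
      rintro rfl
      exact huv (by rw [OrbE_s_apply])
    have h2 : u ≠ v := by rintro rfl; exact huv rfl
    have h3 : v ≠ s u := by
      rintro rfl
      exact huv (by rw [OrbE_s_apply])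
    rw [hA, A_entry, if_neg h1, if_neg h2, if_neg h3]
    ring
  rw [← permanent_submatrix_equiv (OrbE s).symm A]
  rw [permanent_sigma (A.submatrix (OrbE s).symm (OrbE s).symm) (fun x y hxy =>
    hfst _ _ (by rw [Equiv.apply_symm_apply, Equiv.apply_symm_apply]; exact hxy))]
  refine Finset.prod_congr rfl fun q _ => ?_
  have hm3 : 3 ≤ Function.minimalPeriod (fun y => s • y) q.out := minPeriod_ge_three s hs q.out
  have hblock : (Matrix.of fun x y : ZMod (Function.minimalPeriod (fun y => s • y) q.out) =>
      (A.submatrix (OrbE s).symm (OrbE s).symm) ⟨q, x⟩ ⟨q, y⟩) =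
      circ α γ (Function.minimalPeriod (fun y => s • y) q.out) := by
    ext x y
    rw [Matrix.of_apply, Matrix.submatrix_apply, hA]
    exact sub_block s α γ hs q x y
  rw [hblock, circ_permanent α γ hm3, cS_value α γ hα hγ hm3]

theorem sum_minPeriod_eq (hs : ∀ x, s x ≠ x ∧ s (s x) ≠ x) :
    ∑ q : orbitRel.Quotient (Subgroup.zpowers s) (Fin n),
      Function.minimalPeriod (fun y => s • y) q.out = n := by
  classical
  haveI hNZ : ∀ q : orbitRel.Quotient (Subgroup.zpowers s) (Fin n),
      NeZero (Function.minimalPeriod (fun y => s • y) q.out) :=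
    fun q => ⟨by have := minPeriod_ge_three s hs q.out; omega⟩
  have h := Fintype.card_congr (OrbE s)
  rw [Fintype.card_fin, Fintype.card_sigma] at h
  exact (Finset.sum_congr rfl fun q _ => (ZMod.card _).symm).trans h.symm

end Decomp


lemma sq_ineq (x y : ℝ) (hx : 0 ≤ x) (hy : 0 ≤ y) :
    ∀ m : ℕ, 2 ≤ m → x ^ (2 * m) + y ^ (2 * m) + 2 * (x ^ m * y ^ m) ≤ (x ^ 2 + y ^ 2) ^ m := by
  intro m hm
  induction m, hm using Nat.le_induction with
  | base => exact le_of_eq (by ring)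
  | succ m hm ih =>
    have e1 : (x ^ 2 + y ^ 2) ^ (m + 1) = (x ^ 2 + y ^ 2) ^ m * (x ^ 2 + y ^ 2) := by ring
    have h1 : (x ^ (2 * m) + y ^ (2 * m) + 2 * (x ^ m * y ^ m)) * (x ^ 2 + y ^ 2) ≤
        (x ^ 2 + y ^ 2) ^ m * (x ^ 2 + y ^ 2) := by
      have hnn : (0:ℝ) ≤ x ^ 2 + y ^ 2 := by positivity
      exact mul_le_mul_of_nonneg_right ih hnn
    have h2 : x ^ (2 * (m + 1)) + y ^ (2 * (m + 1)) + 2 * (x ^ (m + 1) * y ^ (m + 1)) ≤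
        (x ^ (2 * m) + y ^ (2 * m) + 2 * (x ^ m * y ^ m)) * (x ^ 2 + y ^ 2) := by
      have k1 : x ^ (2 * (m + 1)) = x ^ (2 * m) * x ^ 2 := by ring
      have k2 : y ^ (2 * (m + 1)) = y ^ (2 * m) * y ^ 2 := by ring
      have k3 : x ^ (m + 1) = x ^ m * x := by ring
      have k4 : y ^ (m + 1) = y ^ m * y := by ring
      have hxm : (0:ℝ) ≤ x ^ m := pow_nonneg hx m
      have hym : (0:ℝ) ≤ y ^ m := pow_nonneg hy m
      have h2m : (0:ℝ) ≤ x ^ (2 * m) := pow_nonneg hx _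
      have h2m' : (0:ℝ) ≤ y ^ (2 * m) := pow_nonneg hy _
      rw [k1, k2, k3, k4]
      nlinarith [mul_nonneg (mul_nonneg hxm hym) (sq_nonneg (x - y)),
        mul_nonneg h2m (sq_nonneg y), mul_nonneg h2m' (sq_nonneg x),
        mul_nonneg (mul_nonneg hxm hym) (sq_nonneg x),
        mul_nonneg (mul_nonneg hxm hym) (sq_nonneg y)]
    rw [e1]
    exact h2.trans h1

lemma even_pow_bound (a g : ℝ) (ha : 0 ≤ a) (hg : 0 ≤ g) (m : ℕ) (hm : 2 ≤ m) :
    (a ^ (2 * m) + g ^ (2 * m)) ^ 2 ≤ (a ^ 4 + g ^ 4) ^ m := by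
  have key := sq_ineq (a ^ 2) (g ^ 2) (by positivity) (by positivity) m hm
  have e1 : (a ^ 2) ^ (2 * m) = a ^ (2 * m) * a ^ (2 * m) := by ring
  calc (a ^ (2 * m) + g ^ (2 * m)) ^ 2
      = (a ^ 2) ^ (2 * m) + (g ^ 2) ^ (2 * m) + 2 * ((a ^ 2) ^ m * (g ^ 2) ^ m) := by ring
    _ ≤ ((a ^ 2) ^ 2 + (g ^ 2) ^ 2) ^ m := key
    _ = (a ^ 4 + g ^ 4) ^ m := by ring_nf

lemma rpow_const_facts :
    0 ≤ ((2:ℝ) ^ ((1:ℝ)/3) - 1) ∧ (((2:ℝ) ^ ((1:ℝ)/3) - 1) ^ ((1:ℝ)/4)) ^ (4:ℕ) =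
      (2:ℝ) ^ ((1:ℝ)/3) - 1 ∧ ((2:ℝ) ^ ((1:ℝ)/3)) ^ (3:ℕ) = 2 := by
  have h1 : (1:ℝ) ≤ (2:ℝ) ^ ((1:ℝ)/3) := by
    calc (1:ℝ) = (2:ℝ) ^ (0:ℝ) := (Real.rpow_zero 2).symm
    _ ≤ (2:ℝ) ^ ((1:ℝ)/3) := Real.rpow_le_rpow_of_exponent_le one_le_two (by norm_num)
  have h0 : (0:ℝ) ≤ (2:ℝ) ^ ((1:ℝ)/3) - 1 := by linarith
  refine ⟨h0, ?_, ?_⟩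
  · rw [← Real.rpow_natCast (((2:ℝ) ^ ((1:ℝ)/3) - 1) ^ ((1:ℝ)/4)) 4, ← Real.rpow_mul h0]
    norm_num
  · rw [← Real.rpow_natCast ((2:ℝ) ^ ((1:ℝ)/3)) 3, ← Real.rpow_mul (by norm_num : (0:ℝ) ≤ 2)]
    norm_num

lemma factor_bound (α γ : ℝ) (hγ : 0 ≤ γ)
    (h2 : ((2:ℝ) ^ ((1:ℝ)/3) - 1) ^ ((1:ℝ)/4) * γ ≤ α) (k : ℕ) (hk : 3 ≤ k) :
    (α ^ k + γ ^ k + (γ ^ k + (-α) ^ k)) ^ 4 ≤ (2 * (α ^ 4 + γ ^ 4)) ^ k := by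
  obtain ⟨hc0, hc4, h23⟩ := rpow_const_facts
  have hcnn : 0 ≤ ((2:ℝ) ^ ((1:ℝ)/3) - 1) ^ ((1:ℝ)/4) := Real.rpow_nonneg hc0 _
  have hα : 0 ≤ α := le_trans (mul_nonneg hcnn hγ) h2
  rcases Nat.even_or_odd k with he | ho
  · -- even case
    have hneg : (-α) ^ k = α ^ k := he.neg_pow α
    obtain ⟨m, hm⟩ := he
    have hm2 : 2 ≤ m := by omega
    have hk2 : k = 2 * m := by omega
    rw [hneg]
    have step1 : (α ^ k + γ ^ k + (γ ^ k + α ^ k)) ^ 4 =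
        16 * ((α ^ (2*m) + γ ^ (2*m)) ^ 2) ^ 2 := by rw [hk2]; ring
    have step2 := even_pow_bound α γ hα hγ m hm2
    have step3 : ((α ^ (2*m) + γ ^ (2*m)) ^ 2) ^ 2 ≤ ((α ^ 4 + γ ^ 4) ^ m) ^ 2 :=
      pow_le_pow_left₀ (by positivity) step2 2
    have step4 : (16:ℝ) ≤ 2 ^ k := by
      calc (16:ℝ) = 2 ^ (4:ℕ) := by norm_num
      _ ≤ 2 ^ k := pow_le_pow_right₀ one_le_two (by omega)
    calc (α ^ k + γ ^ k + (γ ^ k + α ^ k)) ^ 4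
        = 16 * ((α ^ (2*m) + γ ^ (2*m)) ^ 2) ^ 2 := step1
      _ ≤ 16 * ((α ^ 4 + γ ^ 4) ^ m) ^ 2 := by nlinarith [step3]
      _ = 16 * (α ^ 4 + γ ^ 4) ^ k := by rw [hk2]; ring
      _ ≤ 2 ^ k * (α ^ 4 + γ ^ 4) ^ k := by
          have : (0:ℝ) ≤ (α ^ 4 + γ ^ 4) ^ k := by positivity
          nlinarith [step4]
      _ = (2 * (α ^ 4 + γ ^ 4)) ^ k := (mul_pow 2 _ k).symm
  · -- odd case
    have hneg : (-α) ^ k = -(α ^ k) := ho.neg_pow α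
    rw [hneg]
    have hsimp : α ^ k + γ ^ k + (γ ^ k + -(α ^ k)) = 2 * γ ^ k := by ring
    rw [hsimp]
    have hq : 2 ^ ((1:ℝ)/3) * γ ^ 4 ≤ α ^ 4 + γ ^ 4 := by
      have h1 : (((2:ℝ) ^ ((1:ℝ)/3) - 1) ^ ((1:ℝ)/4) * γ) ^ (4:ℕ) ≤ α ^ 4 :=
        pow_le_pow_left₀ (mul_nonneg hcnn hγ) h2 4
      rw [mul_pow, hc4] at h1
      nlinarith [h1]
    have hbase : 2 * (2 ^ ((1:ℝ)/3) * γ ^ 4) ≤ 2 * (α ^ 4 + γ ^ 4) := by linarith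
    have hstep : (2 * (2 ^ ((1:ℝ)/3) * γ ^ 4)) ^ k ≤ (2 * (α ^ 4 + γ ^ 4)) ^ k :=
      pow_le_pow_left₀ (by positivity) hbase k
    refine le_trans ?_ hstep
    have e1 : (2 * ((2:ℝ) ^ ((1:ℝ)/3) * γ ^ 4)) ^ k =
        (2 * (2:ℝ) ^ ((1:ℝ)/3)) ^ k * (γ ^ 4) ^ k := by rw [← mul_pow]; ring_nf
    rw [e1]
    have e2 : (2 * γ ^ k) ^ 4 = 16 * (γ ^ 4) ^ k := by
      rw [mul_pow, ← pow_mul, ← pow_mul, Nat.mul_comm k 4]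
      norm_num
    rw [e2]
    have hg4 : (0:ℝ) ≤ (γ ^ 4) ^ k := by positivity
    have h16 : (16:ℝ) ≤ (2 * (2:ℝ) ^ ((1:ℝ)/3)) ^ k := by
      have hb1 : (1:ℝ) ≤ 2 * (2:ℝ) ^ ((1:ℝ)/3) := by
        have : (1:ℝ) ≤ (2:ℝ) ^ ((1:ℝ)/3) := by
          calc (1:ℝ) = (2:ℝ) ^ (0:ℝ) := (Real.rpow_zero 2).symm
          _ ≤ (2:ℝ) ^ ((1:ℝ)/3) := Real.rpow_le_rpow_of_exponent_le one_le_two (by norm_num)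
        linarith
      calc (16:ℝ) = (2 * 2 ^ ((1:ℝ)/3)) ^ (3:ℕ) := by
            rw [mul_pow, h23]; norm_num
      _ ≤ (2 * 2 ^ ((1:ℝ)/3)) ^ k := pow_le_pow_right₀ hb1 hk
    nlinarith [h16, hg4]

lemma factor_nonneg (α γ : ℝ) (hα : 0 ≤ α) (hγ : 0 ≤ γ) (k : ℕ) :
    0 ≤ α ^ k + γ ^ k + (γ ^ k + (-α) ^ k) := by
  rcases Nat.even_or_odd k with he | ho
  · rw [he.neg_pow α]
    have := pow_nonneg hα k
    have := pow_nonneg hγ k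
    linarith
  · rw [ho.neg_pow α]
    have := pow_nonneg hγ k
    linarith


open Matrix

/-- `Λ̂_n(α,β,γ)`: matrices `α·Sᵀ + β·I + γ·S` where `S` is the permutation matrix of a
permutation of `{1,…,n}` all of whose cycles have length at least 3 (note `Sᵀ = S⁻¹`). -/
def LambdaHat (n : ℕ) (α β γ : ℝ) : Set (Matrix (Fin n) (Fin n) ℝ) :=
  {A | ∃ s : Equiv.Perm (Fin n), (∀ x, s x ≠ x ∧ s (s x) ≠ x) ∧
    A = α • ((s⁻¹).permMatrix ℝ) + β • (1 : Matrix (Fin n) (Fin n) ℝ) + γ • (s.permMatrix ℝ)}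

theorem stmt_9 (α γ : ℝ) (h1 : 0 ≤ γ)
    (h2 : ((2 : ℝ) ^ ((1 : ℝ) / 3) - 1) ^ ((1 : ℝ) / 4) * γ ≤ α)
    (n : ℕ) (hn : 4 ≤ n) (hn4 : 4 ∣ n) :
    IsGreatest {x : ℝ | ∃ A ∈ LambdaHat n α (γ - α) γ, A.permanent = x}
      ((2 * (α ^ 4 + γ ^ 4)) ^ (n / 4)) := by
  classical
  have hα : 0 ≤ α := by
    obtain ⟨hc0, -, -⟩ := rpow_const_facts
    exact le_trans (mul_nonneg (Real.rpow_nonneg hc0 _) h1) h2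
  have hd : n / 4 * 4 = n := Nat.div_mul_cancel hn4
  constructor
  · -- membership : product of 4-cycles
    set e : Fin (n / 4) × Fin 4 ≃ Fin n := finProdFinEquiv.trans (finCongr hd) with he
    set s₀ : Equiv.Perm (Fin n) :=
      e.permCongr ((Equiv.refl (Fin (n / 4))).prodCongr (Equiv.addRight (1 : Fin 4))) with hs₀def
    have happ : ∀ p : Fin (n / 4) × Fin 4, s₀ (e p) = e (p.1, p.2 + 1) := by
      intro p
      simp [hs₀def, Equiv.permCongr_apply, Equiv.prodCongr_apply, Prod.map]
    have fin4_cancel : ∀ (b c : Fin 4), b + c = b → c = 0 := by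
      intro b c h
      have : b + c = b + 0 := by rwa [add_zero]
      exact add_left_cancel this
    have hs₀ : ∀ x, s₀ x ≠ x ∧ s₀ (s₀ x) ≠ x := by
      intro x
      obtain ⟨p, rfl⟩ : ∃ p, x = e p := ⟨e.symm x, (e.apply_symm_apply x).symm⟩
      constructor
      · rw [happ]
        intro h
        have h2' := congrArg Prod.snd (e.injective h)
        have : p.2 + 1 = p.2 := h2'
        exact absurd (fin4_cancel _ _ this) (by decide)
      · rw [happ, happ]
        intro h
        have h2' := congrArg Prod.snd (e.injective h)
        have h3 : p.2 + (1 + 1) = p.2 := by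
          have : (p.2 + 1) + 1 = p.2 := h2'
          rwa [add_assoc] at this
        exact absurd (fin4_cancel _ _ h3) (by decide)
    have hper : ∀ x : Fin n, Function.minimalPeriod (fun y => s₀ • y) x = 4 := by
      intro x
      obtain ⟨p, rfl⟩ : ∃ p, x = e p := ⟨e.symm x, (e.apply_symm_apply x).symm⟩
      have hfour : ∀ b : Fin 4, b + 1 + 1 + 1 + 1 = b := by decide
      have hpp : Function.IsPeriodicPt (fun y => s₀ • y) 4 (e p) := by
        show (fun y : Fin n => s₀ • y)^[4] (e p) = e p
        have : (fun y : Fin n => s₀ • y)^[4] (e p) = s₀ (s₀ (s₀ (s₀ (e p)))) := rfl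
        rw [this, happ, happ, happ, happ, hfour]
      have hdvd := hpp.minimalPeriod_dvd
      have h3 := minPeriod_ge_three s₀ hs₀ (e p)
      have hle := Nat.le_of_dvd (by norm_num) hdvd
      have hne3 : Function.minimalPeriod (fun y => s₀ • y) (e p) ≠ 3 := by
        intro h
        rw [h] at hdvd
        norm_num at hdvd
      omega
    haveI : Fintype (MulAction.orbitRel.Quotient (Subgroup.zpowers s₀) (Fin n)) :=
      Fintype.ofFinite _
    refine ⟨_, ⟨s₀, hs₀, rfl⟩, ?_⟩
    rw [permanent_A s₀ α γ hα h1 hs₀]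
    have hprod : ∏ q : MulAction.orbitRel.Quotient (Subgroup.zpowers s₀) (Fin n),
        (α ^ Function.minimalPeriod (fun y => s₀ • y) q.out +
          γ ^ Function.minimalPeriod (fun y => s₀ • y) q.out +
          (γ ^ Function.minimalPeriod (fun y => s₀ • y) q.out +
            (-α) ^ Function.minimalPeriod (fun y => s₀ • y) q.out)) =
        ∏ _q : MulAction.orbitRel.Quotient (Subgroup.zpowers s₀) (Fin n),
          (2 * (α ^ 4 + γ ^ 4)) := by
      refine Finset.prod_congr rfl fun q _ => ?_
      rw [hper]
      have : (-α) ^ (4:ℕ) = α ^ (4:ℕ) := Even.neg_pow (by decide) α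
      rw [this]; ring
    rw [hprod, Finset.prod_const, Finset.card_univ]
    congr 1
    have hsum := sum_minPeriod_eq s₀ hs₀
    rw [Finset.sum_congr rfl (fun q _ => hper q.out), Finset.sum_const, Finset.card_univ,
      smul_eq_mul] at hsum
    omega
  · -- upper bound
    rintro x ⟨A, ⟨s, hs, rfl⟩, rfl⟩
    haveI : Fintype (MulAction.orbitRel.Quotient (Subgroup.zpowers s) (Fin n)) :=
      Fintype.ofFinite _
    rw [permanent_A s α γ hα h1 hs]
    have hC0 : (0:ℝ) ≤ 2 * (α ^ 4 + γ ^ 4) := by positivity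
    refine le_of_pow_le_pow_left₀ (n := 4) (by norm_num) (pow_nonneg hC0 _) ?_
    have hb : ∀ q : MulAction.orbitRel.Quotient (Subgroup.zpowers s) (Fin n),
        (α ^ Function.minimalPeriod (fun y => s • y) q.out +
          γ ^ Function.minimalPeriod (fun y => s • y) q.out +
          (γ ^ Function.minimalPeriod (fun y => s • y) q.out +
            (-α) ^ Function.minimalPeriod (fun y => s • y) q.out)) ^ 4 ≤
        (2 * (α ^ 4 + γ ^ 4)) ^ Function.minimalPeriod (fun y => s • y) q.out :=
      fun q => factor_bound α γ h1 h2 _ (minPeriod_ge_three s hs q.out)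
    calc (∏ q : MulAction.orbitRel.Quotient (Subgroup.zpowers s) (Fin n),
          (α ^ Function.minimalPeriod (fun y => s • y) q.out +
            γ ^ Function.minimalPeriod (fun y => s • y) q.out +
            (γ ^ Function.minimalPeriod (fun y => s • y) q.out +
              (-α) ^ Function.minimalPeriod (fun y => s • y) q.out))) ^ 4
        = ∏ q : MulAction.orbitRel.Quotient (Subgroup.zpowers s) (Fin n),
          (α ^ Function.minimalPeriod (fun y => s • y) q.out +
            γ ^ Function.minimalPeriod (fun y => s • y) q.out +
            (γ ^ Function.minimalPeriod (fun y => s • y) q.out +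
              (-α) ^ Function.minimalPeriod (fun y => s • y) q.out)) ^ 4 := by
          rw [Finset.prod_pow]
      _ ≤ ∏ q : MulAction.orbitRel.Quotient (Subgroup.zpowers s) (Fin n),
            (2 * (α ^ 4 + γ ^ 4)) ^ Function.minimalPeriod (fun y => s • y) q.out := by
          refine Finset.prod_le_prod (fun q _ => ?_) (fun q _ => hb q)
          exact pow_nonneg (factor_nonneg α γ hα h1 _) 4
      _ = (2 * (α ^ 4 + γ ^ 4)) ^
            (∑ q : MulAction.orbitRel.Quotient (Subgroup.zpowers s) (Fin n),
              Function.minimalPeriod (fun y => s • y) q.out) :=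
          Finset.prod_pow_eq_pow_sum _ _ _
      _ = (2 * (α ^ 4 + γ ^ 4)) ^ n := by rw [sum_minPeriod_eq s hs]
      _ = ((2 * (α ^ 4 + γ ^ 4)) ^ (n / 4)) ^ 4 := by rw [← pow_mul, hd]
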